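/- Let G be a non-constant multi-GGS group and g ∈ Stab_{G_reg}(1) with first-layer sections g|_k = a^{s_k} b^{n_k} y_k where n_k ∈ 𝔽_p^r and y_k ∈ G'. Then the A-exponents are forced: s_k = Σ_{i=0}^{p-1} n_i · e_{k-i} for each k ∈ {0,...,p-1}, where e_j denotes the j-th column of the defining matrix E (with e_0 = 0 and indices mod p). -/

import Mathlib

/-!  Automorphisms of the `p`-regular rooted tree `X*`, `X = {0, …, p-1} = ℤ/pℤ`, encoded by
their portraits: an automorphism is the collection of its labels `g|^v ∈ Sym(X)`, `v ∈ X*`. -/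

/-- The automorphism group of the `p`-regular rooted tree, encoded via portraits. -/
def TreeAut (p : ℕ) := List (ZMod p) → Equiv.Perm (ZMod p)

instance {p : ℕ} : CoeFun (TreeAut p) (fun _ => List (ZMod p) → Equiv.Perm (ZMod p)) :=
  ⟨fun g => g⟩

/-- The action of a portrait on the words of the tree. -/
def pact {p : ℕ} : TreeAut p → List (ZMod p) → List (ZMod p)
  | _, [] => []
  | L, x :: v => L [] x :: pact (fun w => L (x :: w)) v

/-- The inverse action of a portrait on the words of the tree. -/
def pactInv {p : ℕ} : TreeAut p → List (ZMod p) → List (ZMod p)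
  | _, [] => []
  | L, y :: v => (L [])⁻¹ y :: pactInv (fun w => L ((L [])⁻¹ y :: w)) v

theorem pactInv_pact {p : ℕ} (L : TreeAut p) (v : List (ZMod p)) :
    pactInv L (pact L v) = v := by
  induction v generalizing L with
  | nil => rfl
  | cons x v ih =>
    simp [pact, pactInv]
    exact ih _

theorem pact_pactInv {p : ℕ} (L : TreeAut p) (v : List (ZMod p)) :
    pact L (pactInv L v) = v := by
  induction v generalizing L with
  | nil => rfl
  | cons x v ih =>
    simp [pact, pactInv]
    exact ih _

theorem pact_one {p : ℕ} (v : List (ZMod p)) :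
    pact (fun _ => 1 : TreeAut p) v = v := by
  induction v with
  | nil => rfl
  | cons x v ih => simpa [pact] using ih

theorem pact_mulP {p : ℕ} (L M : TreeAut p) (v : List (ZMod p)) :
    pact (fun u => L (pact M u) * M u) v = pact L (pact M v) := by
  induction v generalizing L M with
  | nil => rfl
  | cons x v ih =>
    simp only [pact, Equiv.Perm.mul_apply]
    exact congrArg _ (ih (fun u => L ((M []) x :: u)) (fun w => M (x :: w)))

instance {p : ℕ} : One (TreeAut p) := ⟨fun _ => 1⟩
instance {p : ℕ} : Mul (TreeAut p) := ⟨fun L M => fun v => L (pact M v) * M v⟩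
instance {p : ℕ} : Inv (TreeAut p) := ⟨fun L => fun v => (L (pactInv L v))⁻¹⟩

theorem TreeAut.mul_def {p : ℕ} (L M : TreeAut p) (v : List (ZMod p)) :
    (L * M) v = L (pact M v) * M v := rfl
theorem TreeAut.one_def {p : ℕ} (v : List (ZMod p)) : (1 : TreeAut p) v = 1 := rfl
theorem TreeAut.inv_def {p : ℕ} (L : TreeAut p) (v : List (ZMod p)) :
    L⁻¹ v = (L (pactInv L v))⁻¹ := rfl

instance {p : ℕ} : Group (TreeAut p) where
  mul_assoc a b c := by
    funext v
    show (a * b) (pact c v) * c v = a (pact (b * c) v) * ((b * c) v)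
    show a (pact b (pact c v)) * b (pact c v) * c v
        = a (pact (fun u => b (pact c u) * c u) v) * (b (pact c v) * c v)
    rw [pact_mulP, mul_assoc]
  one_mul a := by
    funext v
    show (1 : TreeAut p) (pact a v) * a v = a v
    simp [TreeAut.one_def]
  mul_one a := by
    funext v
    show a (pact (fun _ => 1) v) * (1 : Equiv.Perm (ZMod p)) = a v
    rw [pact_one, mul_one]
  inv_mul_cancel a := by
    funext v
    show (a (pactInv a (pact a v)))⁻¹ * a v = (1 : TreeAut p) v
    rw [pactInv_pact, TreeAut.one_def, inv_mul_cancel]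

/-- The rooted automorphism with label `σ` at the root and trivial labels elsewhere. -/
def rootedAut {p : ℕ} (σ : Equiv.Perm (ZMod p)) : TreeAut p :=
  fun v => if v = [] then σ else 1

/-- The rooted automorphism `a` given by the `p`-cycle `σ = (0 1 … p-1)`, `x ↦ x + 1`. -/
def aAut (p : ℕ) : TreeAut p := rootedAut (Equiv.addRight (1 : ZMod p))

/-- The section `g|_x` of `g` at the first-layer vertex `x`. -/
def sect {p : ℕ} (g : TreeAut p) (x : ZMod p) : TreeAut p := fun v => g (x :: v)

/-- The `n`-th diagonal `κ_n(g) = ψ_n⁻¹(g, …, g)`. -/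
def kappa {p : ℕ} (n : ℕ) (g : TreeAut p) : TreeAut p :=
  fun v => if n ≤ v.length then g (v.drop n) else 1

/-- `ψ_n⁻¹(g, 1, …, 1)`: the automorphism acting as `g` below the vertex `0^n` and trivially
elsewhere. -/
def embAt {p : ℕ} (n : ℕ) (g : TreeAut p) : TreeAut p :=
  fun v => if List.replicate n (0 : ZMod p) <+: v then g (v.drop n) else 1

/-- The scalar product of two vectors in `𝔽_p^r`. -/
def dotp {p r : ℕ} (n m : Fin r → ZMod p) : ZMod p := ∑ j, n j * m j

/-- The directed generator `b^n` of the multi-GGS group with defining data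
`e : ℤ/pℤ → 𝔽_p^r` (the columns of the matrix `E`, with `e 0 = 0`): it satisfies
`ψ_1(b^n) = (b^n, a^{n·e_1}, …, a^{n·e_{p-1}})`. -/
def bAut {p r : ℕ} (e : ZMod p → Fin r → ZMod p) (n : Fin r → ZMod p) : TreeAut p :=
  fun v =>
    match v.getLast? with
    | none => 1
    | some i =>
      if ∀ x ∈ v.dropLast, x = 0 then Equiv.addRight (dotp n (e i)) else 1

/-- The multi-GGS group `G_E = ⟨A ∪ B⟩` associated to the data `e`. -/
def GGS {p r : ℕ} (e : ZMod p → Fin r → ZMod p) : Subgroup (TreeAut p) :=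
  Subgroup.closure ({aAut p} ∪ Set.range (bAut e))

open scoped commutatorElement

/-- The element `c̲ = ψ_1⁻¹([b^{s_1}, a], 1, …, 1)`. -/
def cAut {p r : ℕ} (e : ZMod p → Fin r → ZMod p) : TreeAut p :=
  embAt 1 ⁅bAut e (fun j => if (j : ℕ) = 0 then 1 else 0), aAut p⁆

/-- The regularisation `G_reg = ⟨G ∪ {c̲}⟩` of a multi-GGS group. -/
def GGSreg {p r : ℕ} (e : ZMod p → Fin r → ZMod p) : Subgroup (TreeAut p) :=
  Subgroup.closure ({aAut p, cAut e} ∪ Set.range (bAut e))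

/-- The word length on `Aut(X*)` with respect to the generating set `A ∪ B` of the multi-GGS
group determined by `e`. -/
noncomputable def ggsLength {p r : ℕ} (e : ZMod p → Fin r → ZMod p) (g : TreeAut p) : ℕ :=
  sInf {m | ∃ l : List (TreeAut p),
    (∀ x ∈ l, x ∈ Subgroup.zpowers (aAut p) ∨ x ∈ Set.range (bAut e)) ∧
    l.length = m ∧ l.prod = g}

/-- `e` defines a *non-constant* multi-GGS group: the defining space `E` is not the line of
constant vectors. -/
def NonConstant {p r : ℕ} (e : ZMod p → Fin r → ZMod p) : Prop :=
  (∃ i j : ZMod p, i ≠ 0 ∧ j ≠ 0 ∧ e i ≠ e j) ∧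
    LinearIndependent (ZMod p) (fun j : Fin r => fun i : ZMod p => e i j)

/-- `e` defines a *symmetric* GGS group: `r = 1`, the defining space is contained in the
symmetric subspace `{λ : λ_i = λ_{p-i}}`, and the group is non-constant. -/
def IsSymmetricGGS {p r : ℕ} (e : ZMod p → Fin r → ZMod p) : Prop :=
  r = 1 ∧ (∀ (i : ZMod p) (j : Fin r), e i j = e (-i) j) ∧ NonConstant e

/-- `e` defines a *regular* multi-GGS group: non-constant and not symmetric. -/
def IsRegularGGS {p r : ℕ} (e : ZMod p → Fin r → ZMod p) : Prop :=
  NonConstant e ∧ ¬ IsSymmetricGGS e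

namespace MGGS

open List

variable {p : ℕ}

/-! ### Basic permutation lemmas -/

theorem addRight_zero : Equiv.addRight (0 : ZMod p) = 1 :=
  Equiv.ext fun x => add_zero x

theorem addRight_mul (a b : ZMod p) :
    Equiv.addRight a * Equiv.addRight b = Equiv.addRight (b + a) :=
  Equiv.ext fun x => by simp [Equiv.Perm.mul_apply, add_assoc]

theorem addRight_inv (t : ZMod p) : (Equiv.addRight t)⁻¹ = Equiv.addRight (-t) := by
  rw [inv_eq_iff_mul_eq_one, addRight_mul, neg_add_cancel, addRight_zero]

theorem addRight_pow (m : ℕ) :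
    (Equiv.addRight (1 : ZMod p)) ^ m = Equiv.addRight (m : ZMod p) := by
  induction m with
  | zero => simp [addRight_zero]
  | succ k ih => rw [pow_succ, ih, addRight_mul]; norm_num [add_comm]

theorem addRight_apply (a x : ZMod p) : Equiv.addRight a x = x + a := rfl

/-! ### pact and sections -/

theorem pact_length (L : TreeAut p) (v : List (ZMod p)) : (pact L v).length = v.length := by
  induction v generalizing L with
  | nil => rfl
  | cons x v ih => simp [pact]; exact ih _

theorem pactInv_length (L : TreeAut p) (v : List (ZMod p)) :
    (pactInv L v).length = v.length := by
  induction v generalizing L with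
  | nil => rfl
  | cons x v ih => simp [pactInv]; exact ih _

/-- The section of `g` at an arbitrary vertex `v`. -/
def sectA (g : TreeAut p) (v : List (ZMod p)) : TreeAut p := fun w => g (v ++ w)

theorem sectA_nil (g : TreeAut p) : sectA g [] = g := rfl

theorem sectA_append (g : TreeAut p) (v w : List (ZMod p)) :
    sectA g (v ++ w) = sectA (sectA g v) w := by
  funext u; show g ((v ++ w) ++ u) = g (v ++ (w ++ u)); rw [List.append_assoc]

theorem sectA_one (v : List (ZMod p)) : sectA (1 : TreeAut p) v = 1 := rfl

theorem pact_append (L : TreeAut p) (v w : List (ZMod p)) :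
    pact L (v ++ w) = pact L v ++ pact (sectA L v) w := by
  induction v generalizing L with
  | nil => rfl
  | cons x v ih =>
    simp only [List.cons_append, pact]
    show _ :: pact (fun u => L (x :: u)) (v ++ w) = _
    rw [ih (fun u => L (x :: u))]
    rfl

theorem pact_singleton (L : TreeAut p) (x : ZMod p) : pact L [x] = [L [] x] := rfl

theorem sectA_mul (g h : TreeAut p) (v : List (ZMod p)) :
    sectA (g * h) v = sectA g (pact h v) * sectA h v := by
  funext w
  show (g * h) (v ++ w) = _
  rw [TreeAut.mul_def, pact_append]
  rfl

theorem pact_mul (g h : TreeAut p) (v : List (ZMod p)) :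
    pact (g * h) v = pact g (pact h v) := pact_mulP g h v

theorem pact_one' (v : List (ZMod p)) : pact (1 : TreeAut p) v = v := pact_one v

theorem pact_inv_pact (g : TreeAut p) (v : List (ZMod p)) :
    pact g (pact g⁻¹ v) = v := by
  rw [← pact_mul, mul_inv_cancel, pact_one']

theorem pact_pact_inv (g : TreeAut p) (v : List (ZMod p)) :
    pact g⁻¹ (pact g v) = v := by
  rw [← pact_mul, inv_mul_cancel, pact_one']

theorem sectA_inv (g : TreeAut p) (v : List (ZMod p)) :
    sectA g⁻¹ v = (sectA g (pact g⁻¹ v))⁻¹ := by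
  have h := sectA_mul g⁻¹ g (pact g⁻¹ v)
  rw [pact_inv_pact, inv_mul_cancel, sectA_one] at h
  exact mul_eq_one_iff_eq_inv.mp h.symm


/-! ### Finitary automorphisms -/

def Fini (f : TreeAut p) (E : ℕ) : Prop := ∀ w : List (ZMod p), E ≤ w.length → f w = 1

theorem Fini.one (E : ℕ) : Fini (1 : TreeAut p) E := fun _ _ => rfl

theorem Fini.mono {f : TreeAut p} {E E' : ℕ} (h : Fini f E) (hE : E ≤ E') : Fini f E' :=
  fun w hw => h w (le_trans hE hw)

theorem Fini.mul {f g : TreeAut p} {E : ℕ} (hf : Fini f E) (hg : Fini g E) :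
    Fini (f * g) E := by
  intro w hw
  rw [TreeAut.mul_def, hf _ (by rw [pact_length]; exact hw), hg _ hw, mul_one]

theorem Fini.inv {f : TreeAut p} {E : ℕ} (hf : Fini f E) : Fini f⁻¹ E := by
  intro w hw
  rw [TreeAut.inv_def, hf _ (by rw [pactInv_length]; exact hw), inv_one]

theorem Fini.sectA {f : TreeAut p} {E : ℕ} (hf : Fini f E) (v : List (ZMod p)) :
    Fini (MGGS.sectA f v) E := fun w hw => hf (v ++ w) (by simp; omega)

theorem sectA_of_fini {f : TreeAut p} {E : ℕ} (hf : Fini f E) {v : List (ZMod p)}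
    (hv : E ≤ v.length) : sectA f v = 1 := by
  funext w; exact hf (v ++ w) (by simp; omega)

theorem pact_fini_split {f : TreeAut p} {E : ℕ} (hf : Fini f E) {v : List (ZMod p)}
    (hv : E ≤ v.length) (w : List (ZMod p)) : pact f (v ++ w) = pact f v ++ w := by
  rw [pact_append, sectA_of_fini hf hv, pact_one']

/-! ### Rooted automorphisms -/

theorem rootedAut_nil (σ : Equiv.Perm (ZMod p)) : rootedAut σ [] = σ := rfl

theorem rootedAut_cons (σ : Equiv.Perm (ZMod p)) (x : ZMod p) (v : List (ZMod p)) :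
    rootedAut σ (x :: v) = 1 := by
  simp [rootedAut]

theorem rootedAut_ne_nil (σ : Equiv.Perm (ZMod p)) {v : List (ZMod p)} (h : v ≠ []) :
    rootedAut σ v = 1 := by
  simp [rootedAut, h]

theorem Fini.rootedAut (σ : Equiv.Perm (ZMod p)) : Fini (rootedAut σ) 1 := by
  intro w hw
  cases w with
  | nil => simp at hw
  | cons x v => exact rootedAut_cons σ x v

theorem sectA_rootedAut (σ : Equiv.Perm (ZMod p)) (x : ZMod p) :
    sectA (rootedAut σ) [x] = 1 := by
  funext w; exact rootedAut_cons σ x w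

theorem pact_rootedAut (σ : Equiv.Perm (ZMod p)) (x : ZMod p) (v : List (ZMod p)) :
    pact (rootedAut σ) (x :: v) = σ x :: v := by
  show rootedAut σ [] x :: pact (fun w => rootedAut σ (x :: w)) v = _
  rw [rootedAut_nil]
  congr 1
  have h1 : (fun w => rootedAut σ (x :: w)) = (1 : TreeAut p) := by
    funext w; exact rootedAut_cons σ x w
  rw [h1, pact_one']

theorem rootedAut_mul (σ τ : Equiv.Perm (ZMod p)) :
    rootedAut σ * rootedAut τ = rootedAut (σ * τ) := by
  funext v
  cases v with
  | nil => rfl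
  | cons x v =>
    rw [TreeAut.mul_def, pact_rootedAut, rootedAut_cons, rootedAut_cons, rootedAut_cons,
      mul_one]

theorem rootedAut_one : rootedAut (1 : Equiv.Perm (ZMod p)) = 1 := by
  funext v
  cases v with
  | nil => rfl
  | cons x v => exact rootedAut_cons 1 x v

theorem rootedAut_pow (σ : Equiv.Perm (ZMod p)) (m : ℕ) :
    rootedAut σ ^ m = rootedAut (σ ^ m) := by
  induction m with
  | zero => simp [rootedAut_one]
  | succ k ih => rw [pow_succ, pow_succ, ih, rootedAut_mul]

/-! ### Directed automorphisms -/

/-- The directed automorphism with label function `lam` along the `0`-spine. -/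
def dirA (lam : ZMod p → ZMod p) : TreeAut p :=
  fun v =>
    match v.getLast? with
    | none => 1
    | some i => if ∀ x ∈ v.dropLast, x = 0 then Equiv.addRight (lam i) else 1

theorem bAut_eq_dirA {r : ℕ} (e : ZMod p → Fin r → ZMod p) (n : Fin r → ZMod p) :
    bAut e n = dirA (fun i => dotp n (e i)) := rfl

theorem dirA_nil (lam : ZMod p → ZMod p) : dirA lam [] = 1 := rfl

theorem dirA_concat (lam : ZMod p → ZMod p) (u : List (ZMod p)) (i : ZMod p) :
    dirA lam (u ++ [i]) = if ∀ x ∈ u, x = 0 then Equiv.addRight (lam i) else 1 := by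
  simp [dirA, List.getLast?_concat, List.dropLast_concat]

theorem dirA_junk {lam : ZMod p → ZMod p} {z : List (ZMod p)}
    (h : ¬ ∀ x ∈ z.dropLast, x = 0) : dirA lam z = 1 := by
  unfold dirA
  cases hz : z.getLast? with
  | none => rfl
  | some j => simp [h]

theorem dirA_zero : dirA (fun _ => (0 : ZMod p)) = 1 := by
  funext v
  unfold dirA
  cases hz : v.getLast? with
  | none => rfl
  | some j => simp [addRight_zero, TreeAut.one_def]

theorem dirA_cons_zero {lam : ZMod p → ZMod p} (h0 : lam 0 = 0) (w : List (ZMod p)) :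
    dirA lam ((0 : ZMod p) :: w) = dirA lam w := by
  rcases List.eq_nil_or_concat' w with rfl | ⟨u, j, rfl⟩
  · show dirA lam ([] ++ [(0 : ZMod p)]) = _
    rw [dirA_concat, dirA_nil]
    simp [h0, addRight_zero]
  · rw [show ((0 : ZMod p) :: (u ++ [j])) = ((0 : ZMod p) :: u) ++ [j] from rfl,
      dirA_concat, dirA_concat]
    simp

theorem sectA_dirA_allzero {lam : ZMod p → ZMod p} (h0 : lam 0 = 0) :
    ∀ {v : List (ZMod p)}, (∀ x ∈ v, x = 0) → sectA (dirA lam) v = dirA lam := by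
  intro v
  induction v with
  | nil => intro _; rfl
  | cons x v ih =>
    intro hv
    have hx : x = 0 := hv x (by simp)
    subst hx
    funext w
    show dirA lam ((0 :: v) ++ w) = dirA lam w
    rw [List.cons_append, dirA_cons_zero h0]
    exact congrFun (ih fun y hy => hv y (by simp [hy])) w

theorem pact_dirA_allzero {lam : ZMod p → ZMod p} (h0 : lam 0 = 0) :
    ∀ {v : List (ZMod p)}, (∀ x ∈ v, x = 0) → pact (dirA lam) v = v := by
  intro v
  induction v with
  | nil => intro _; rfl
  | cons x v ih =>
    intro hv
    have hx : x = 0 := hv x (by simp)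
    subst hx
    show dirA lam [] 0 :: pact (fun u => dirA lam (0 :: u)) v = _
    have h1 : (fun u => dirA lam ((0 : ZMod p) :: u)) = dirA lam := by
      funext u; exact dirA_cons_zero h0 u
    rw [h1, ih fun y hy => hv y (by simp [hy]), dirA_nil]
    rfl

theorem sectA_dirA_ray {lam : ZMod p → ZMod p} (h0 : lam 0 = 0) {u : List (ZMod p)}
    (hu : ∀ x ∈ u, x = 0) {j : ZMod p} (hj : j ≠ 0) :
    sectA (dirA lam) (u ++ [j]) = rootedAut (Equiv.addRight (lam j)) := by
  rw [sectA_append, sectA_dirA_allzero h0 hu]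
  funext w
  show dirA lam ([j] ++ w) = rootedAut (Equiv.addRight (lam j)) w
  rcases List.eq_nil_or_concat' w with rfl | ⟨u', i, rfl⟩
  · rw [List.append_nil]
    rw [show ([j] : List (ZMod p)) = [] ++ [j] from rfl, dirA_concat]
    simp [rootedAut_nil]
  · rw [show ([j] ++ (u' ++ [i])) = (j :: u') ++ [i] from rfl, dirA_concat]
    rw [if_neg (by intro hcon; exact hj (hcon j (by simp)))]
    exact (rootedAut_ne_nil _ (by simp)).symm

theorem sectA_dirA_junk {lam : ZMod p → ZMod p} {v : List (ZMod p)}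
    (h : ¬ ∀ x ∈ v.dropLast, x = 0) : sectA (dirA lam) v = 1 := by
  funext w
  show dirA lam (v ++ w) = 1
  apply dirA_junk
  intro hall
  apply h
  intro x hx
  apply hall
  rcases List.eq_nil_or_concat' w with rfl | ⟨u, a, rfl⟩
  · simpa using hx
  · rw [show v ++ (u ++ [a]) = (v ++ u) ++ [a] by simp, List.dropLast_concat]
    exact List.mem_append_left u ((List.dropLast_sublist v).subset hx)

theorem sectA_dirA_fini {lam : ZMod p → ZMod p} (h0 : lam 0 = 0) {z : List (ZMod p)}
    (hz : ¬ ∀ x ∈ z, x = 0) : Fini (sectA (dirA lam) z) 1 := by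
  by_cases hd : ∀ x ∈ z.dropLast, x = 0
  · rcases List.eq_nil_or_concat' z with rfl | ⟨u, j, rfl⟩
    · exact absurd (by simp) hz
    · rw [List.dropLast_concat] at hd
      have hj : j ≠ 0 := by
        intro h; subst h
        refine hz fun x hx => ?_
        rcases List.mem_append.mp hx with h | h
        · exact hd x h
        · simpa using h
      rw [sectA_dirA_ray h0 hd hj]
      exact Fini.rootedAut _
  · rw [sectA_dirA_junk hd]
    exact Fini.one 1

theorem pact_dirA_ray {lam : ZMod p → ZMod p} (h0 : lam 0 = 0) {u : List (ZMod p)}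
    (hu : ∀ x ∈ u, x = 0) (j : ZMod p) :
    pact (dirA lam) (u ++ [j]) = u ++ [j] := by
  rw [pact_append, pact_dirA_allzero h0 hu, sectA_dirA_allzero h0 hu, pact_singleton,
    dirA_nil]
  rfl

theorem list_zero_split (w : List (ZMod p)) :
    ∃ k w', w = List.replicate k 0 ++ w' ∧ (w' = [] ∨ ∃ j t, w' = j :: t ∧ j ≠ 0) := by
  induction w with
  | nil => exact ⟨0, [], rfl, Or.inl rfl⟩
  | cons x v ih =>
    by_cases hx : x = 0
    · subst hx
      obtain ⟨k, w', hw, h⟩ := ih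
      exact ⟨k + 1, w', by simp [List.replicate_succ, hw], h⟩
    · exact ⟨0, x :: v, rfl, Or.inr ⟨x, v, rfl, hx⟩⟩

theorem mem_dropLast_mid (v : List (ZMod p)) (j : ZMod p) {r : List (ZMod p)} (hr : r ≠ []) :
    j ∈ (v ++ j :: r).dropLast := by
  rw [show v ++ j :: r = (v ++ [j]) ++ r by simp, List.dropLast_append_of_ne_nil hr]
  exact List.mem_append_left _ (by simp)

theorem dirA_mul {lam₁ lam₂ : ZMod p → ZMod p} (h2 : lam₂ 0 = 0) :
    dirA lam₁ * dirA lam₂ = dirA (fun i => lam₁ i + lam₂ i) := by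
  funext w
  rw [TreeAut.mul_def]
  obtain ⟨k, w', rfl, hcase⟩ := list_zero_split w
  have hrep : ∀ x ∈ List.replicate k (0 : ZMod p), x = 0 :=
    fun x hx => List.eq_of_mem_replicate hx
  rcases hcase with rfl | ⟨j, t, rfl, hj⟩
  · rw [List.append_nil, pact_dirA_allzero h2 hrep]
    cases k with
    | zero => simp [dirA_nil]
    | succ m =>
      rw [List.replicate_succ', dirA_concat, dirA_concat, dirA_concat]
      have hm : ∀ x ∈ List.replicate m (0 : ZMod p), x = 0 :=
        fun x hx => List.eq_of_mem_replicate hx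
      rw [if_pos hm, if_pos hm, if_pos hm, addRight_mul, h2, zero_add, add_zero]
  · cases t with
    | nil =>
      rw [pact_dirA_ray h2 hrep j, dirA_concat, dirA_concat, dirA_concat,
        if_pos hrep, if_pos hrep, if_pos hrep, addRight_mul, add_comm]
    | cons s t' =>
      have hpact : pact (dirA lam₂) (List.replicate k 0 ++ j :: s :: t') =
          List.replicate k 0 ++ j :: pact (sectA (dirA lam₂) [j]) (s :: t') := by
        rw [pact_append, pact_dirA_allzero h2 hrep, sectA_dirA_allzero h2 hrep]
        rfl
      have hlen : pact (sectA (dirA lam₂) [j]) (s :: t') ≠ [] := by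
        intro h
        have := pact_length (sectA (dirA lam₂) [j]) (s :: t')
        rw [h] at this
        simp at this
      rw [hpact, dirA_junk (fun hc => hj (hc j (mem_dropLast_mid _ _ hlen))),
        dirA_junk (fun hc => hj (hc j (mem_dropLast_mid _ _ (by simp)))),
        dirA_junk (fun hc => hj (hc j (mem_dropLast_mid _ _ (by simp)))), mul_one]

theorem dirA_inv {lam : ZMod p → ZMod p} (h0 : lam 0 = 0) :
    (dirA lam)⁻¹ = dirA (fun i => -lam i) := by
  rw [eq_comm, eq_inv_iff_mul_eq_one, dirA_mul h0]
  have : (fun i => -lam i + lam i) = (fun _ => (0 : ZMod p)) := by funext i; simp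
  rw [this, dirA_zero]
/-! ### Structured (eventually germ-like) automorphisms -/

/-- `g` is structured at depth `D` with finitary defect `E`: every depth-`D` section is a
finitary automorphism times a directed automorphism. -/
def Struct (g : TreeAut p) (D E : ℕ) (lam : List (ZMod p) → ZMod p → ZMod p) : Prop :=
  (∀ v, lam v 0 = 0) ∧
    ∀ v : List (ZMod p), v.length = D →
      ∃ f, Fini f E ∧ sectA g v = f * dirA (lam v)

theorem Struct.monoE {g : TreeAut p} {D E E' : ℕ} {lam} (h : Struct g D E lam)
    (hE : E ≤ E') : Struct g D E' lam :=
  ⟨h.1, fun v hv => (h.2 v hv).imp fun _ hf => ⟨hf.1.mono hE, hf.2⟩⟩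

/-- The label system obtained by raising the depth of a structured automorphism by one. -/
def raiseLam (lam : List (ZMod p) → ZMod p → ZMod p) : List (ZMod p) → ZMod p → ZMod p :=
  fun v => if v.getLast? = some 0 then lam v.dropLast else fun _ => 0

theorem raiseLam_concat_zero (lam : List (ZMod p) → ZMod p → ZMod p) (u : List (ZMod p)) :
    raiseLam lam (u ++ [0]) = lam u := by
  simp [raiseLam, List.getLast?_concat, List.dropLast_concat]

theorem raiseLam_concat_ne (lam : List (ZMod p) → ZMod p → ZMod p) (u : List (ZMod p))
    {x : ZMod p} (hx : x ≠ 0) : raiseLam lam (u ++ [x]) = fun _ => 0 := by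
  simp [raiseLam, List.getLast?_concat, hx]

theorem Struct.raise {g : TreeAut p} {D E : ℕ} {lam} (h : Struct g D E lam) (hE : 1 ≤ E) :
    Struct g (D + 1) E (raiseLam lam) := by
  constructor
  · intro v
    unfold raiseLam
    split <;> simp [h.1]
  · intro v hv
    have hvne : v ≠ [] := by intro hnil; rw [hnil] at hv; simp at hv
    obtain ⟨u, x, rfl⟩ := (List.eq_nil_or_concat' v).resolve_left hvne
    have hu : u.length = D := by simpa using hv
    obtain ⟨f, hf, hs⟩ := h.2 u hu
    have hpx : pact (dirA (lam u)) [x] = [x] := by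
      rw [pact_singleton, dirA_nil]; rfl
    have hsect : sectA g (u ++ [x]) = sectA f [x] * sectA (dirA (lam u)) [x] := by
      rw [sectA_append, hs, sectA_mul, hpx]
    by_cases hx : x = 0
    · subst hx
      refine ⟨sectA f [0], hf.sectA _, ?_⟩
      rw [raiseLam_concat_zero, hsect, sectA_dirA_allzero (h.1 u) (by simp)]
    · refine ⟨sectA f [x] * sectA (dirA (lam u)) [x],
        (hf.sectA _).mul ((sectA_dirA_fini (h.1 u) (by simp [hx])).mono hE), ?_⟩
      rw [raiseLam_concat_ne lam u hx, dirA_zero, mul_one, hsect]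

theorem Struct.label {g : TreeAut p} {D E : ℕ} {lam} (h : Struct g D E lam)
    {v u : List (ZMod p)} (hv : v.length = D) (hu : E ≤ u.length + 1) (i : ZMod p) :
    g (v ++ (u ++ [i])) = if ∀ x ∈ u, x = 0 then Equiv.addRight (lam v i) else 1 := by
  obtain ⟨f, hf, hs⟩ := h.2 v hv
  show sectA g v (u ++ [i]) = _
  rw [hs, TreeAut.mul_def, hf _ (by rw [pact_length]; simp; omega), one_mul, dirA_concat]

theorem Struct.label' {g : TreeAut p} {D E : ℕ} {lam} (h : Struct g D E lam)
    {v u : List (ZMod p)} (hv : v.length = D) (hu : E ≤ u.length) :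
    g (v ++ u) = dirA (lam v) u := by
  obtain ⟨f, hf, hs⟩ := h.2 v hv
  show sectA g v u = _
  rw [hs, TreeAut.mul_def, hf _ (by rw [pact_length]; omega), one_mul]

/-- Core computation: sections of a product of two `finitary * directed` automorphisms
one level below the finitary defect are again of `finitary * directed` shape. -/
theorem struct_core {lam₁ lam₂ : ZMod p → ZMod p} {f₂ : TreeAut p} {E : ℕ} (hE : 1 ≤ E)
    (hf₂ : Fini f₂ E) (h1 : lam₁ 0 = 0) (h2 : lam₂ 0 = 0) {v : List (ZMod p)}
    (hv : v.length = E + 1) :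
    ∃ lamv : ZMod p → ZMod p, lamv 0 = 0 ∧ ∃ f, Fini f 1 ∧
      sectA (dirA lam₁) (pact (f₂ * dirA lam₂) v) * sectA (dirA lam₂) v = f * dirA lamv := by
  set z := pact (f₂ * dirA lam₂) v with hzdef
  have hzv : z = pact f₂ (pact (dirA lam₂) v) := pact_mul _ _ v
  by_cases hall : ∀ x ∈ v, x = 0
  · by_cases hzall : ∀ x ∈ z, x = 0
    · exact ⟨fun i => lam₁ i + lam₂ i, by simp [h1, h2], 1, Fini.one 1, by
        rw [sectA_dirA_allzero h1 hzall, sectA_dirA_allzero h2 hall, dirA_mul h2, one_mul]⟩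
    · refine ⟨lam₂, h2, sectA (dirA lam₁) z, sectA_dirA_fini h1 hzall, ?_⟩
      rw [sectA_dirA_allzero h2 hall]
  · by_cases hd : ∀ x ∈ v.dropLast, x = 0
    · obtain ⟨u, j, rfl⟩ := (List.eq_nil_or_concat' v).resolve_left
        (by rintro rfl; exact hall (by simp))
      rw [List.dropLast_concat] at hd
      have hj : j ≠ 0 := by
        intro hj0
        refine hall fun x hx => ?_
        rcases List.mem_append.mp hx with h' | h'
        · exact hd x h'
        · simp at h'; rw [h', hj0]
      have hu : u.length = E := by simpa using hv
      have hzform : z = pact f₂ u ++ [j] := by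
        rw [hzv, pact_dirA_ray h2 hd j, pact_fini_split hf₂ (le_of_eq hu.symm) [j]]
      have hzne : ¬ ∀ x ∈ z, x = 0 := by
        rw [hzform]; intro hc; exact hj (hc j (by simp))
      refine ⟨fun _ => 0, rfl, sectA (dirA lam₁) z * sectA (dirA lam₂) (u ++ [j]),
        (sectA_dirA_fini h1 hzne).mul
          (by rw [sectA_dirA_ray h2 hd hj]; exact Fini.rootedAut _), ?_⟩
      rw [dirA_zero, mul_one]
    · by_cases hzall : ∀ x ∈ z, x = 0
      · exact ⟨lam₁, h1, 1, Fini.one 1, by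
          rw [sectA_dirA_junk hd, mul_one, sectA_dirA_allzero h1 hzall, one_mul]⟩
      · refine ⟨fun _ => 0, rfl, sectA (dirA lam₁) z, sectA_dirA_fini h1 hzall, ?_⟩
        rw [sectA_dirA_junk hd, mul_one, dirA_zero, mul_one]

theorem Struct.mul {g h : TreeAut p} {D E : ℕ} {lamg lamh}
    (hg : Struct g D E lamg) (hh : Struct h D E lamh) (hE : 1 ≤ E) :
    ∃ lam, Struct (g * h) (D + (E + 1)) 1 lam := by
  have key : ∀ w : List (ZMod p), ∃ lamw : ZMod p → ZMod p, lamw 0 = 0 ∧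
      (w.length = D + (E + 1) → ∃ f, Fini f 1 ∧ sectA (g * h) w = f * dirA lamw) := by
    intro w
    by_cases hw : w.length = D + (E + 1)
    case neg => exact ⟨fun _ => 0, rfl, fun h' => absurd h' hw⟩
    case pos =>
      have hsplit : w = w.take D ++ w.drop D := (List.take_append_drop D w).symm
      have hv₀ : (w.take D).length = D := by simp; omega
      have hv : (w.drop D).length = E + 1 := by simp; omega
      obtain ⟨f₂, hf₂, hs₂⟩ := hh.2 (w.take D) hv₀
      have hsh : sectA h w = sectA (dirA (lamh (w.take D))) (w.drop D) := by
        conv_lhs => rw [hsplit]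
        rw [sectA_append, hs₂, sectA_mul,
          sectA_of_fini hf₂ (by rw [pact_length]; omega), one_mul]
      have hph : pact h w = pact h (w.take D) ++ pact (f₂ * dirA (lamh (w.take D))) (w.drop D) := by
        conv_lhs => rw [hsplit]
        rw [pact_append, hs₂]
      obtain ⟨f₁, hf₁, hs₁⟩ := hg.2 (pact h (w.take D)) (by rw [pact_length]; exact hv₀)
      have hsg : sectA g (pact h w) =
          sectA (dirA (lamg (pact h (w.take D)))) (pact (f₂ * dirA (lamh (w.take D))) (w.drop D)) := by
        rw [hph, sectA_append, hs₁, sectA_mul,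
          sectA_of_fini hf₁ (by rw [pact_length, pact_length]; omega), one_mul]
      obtain ⟨lamv, hlv0, f, hf, heq⟩ := struct_core hE hf₂ (hg.1 _) (hh.1 (w.take D)) hv
      exact ⟨lamv, hlv0, fun _ => ⟨f, hf, by rw [sectA_mul, hsh, hsg, heq]⟩⟩
  choose lam hlam0 hlam using key
  exact ⟨lam, hlam0, fun w hw => hlam w hw⟩

theorem Struct.inv {g : TreeAut p} {D E : ℕ} {lam} (hg : Struct g D E lam) (hE : 1 ≤ E) :
    ∃ lam', Struct g⁻¹ (D + (E + 1)) 1 lam' := by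
  have key : ∀ w : List (ZMod p), ∃ lamw : ZMod p → ZMod p, lamw 0 = 0 ∧
      (w.length = D + (E + 1) → ∃ f, Fini f 1 ∧ sectA g⁻¹ w = f * dirA lamw) := by
    intro w
    by_cases hw : w.length = D + (E + 1)
    case neg => exact ⟨fun _ => 0, rfl, fun h' => absurd h' hw⟩
    case pos =>
      set z := pact g⁻¹ w with hzdef
      have hzlen : z.length = D + (E + 1) := by rw [hzdef, pact_length]; exact hw
      have hzsplit : z = z.take D ++ z.drop D := (List.take_append_drop D z).symm
      have hlen1 : (z.take D).length = D := by simp; omega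
      have hlen2 : E ≤ (z.drop D).length := by simp; omega
      obtain ⟨f, hf, hs⟩ := hg.2 (z.take D) hlen1
      have hsA : sectA g z = sectA (dirA (lam (z.take D))) (z.drop D) := by
        conv_lhs => rw [hzsplit]
        rw [sectA_append, hs, sectA_mul,
          sectA_of_fini hf (by rw [pact_length]; omega), one_mul]
      have hsec : sectA g⁻¹ w = (sectA (dirA (lam (z.take D))) (z.drop D))⁻¹ := by
        rw [sectA_inv, ← hzdef, hsA]
      by_cases hall : ∀ x ∈ z.drop D, x = 0
      · refine ⟨fun i => -(lam (z.take D) i), by simp [hg.1], fun _ => ⟨1, Fini.one 1, ?_⟩⟩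
        rw [hsec, sectA_dirA_allzero (hg.1 _) hall, dirA_inv (hg.1 _), one_mul]
      · refine ⟨fun _ => 0, rfl, fun _ => ⟨(sectA (dirA (lam (z.take D))) (z.drop D))⁻¹,
          (sectA_dirA_fini (hg.1 _) hall).inv, ?_⟩⟩
        rw [hsec, dirA_zero, mul_one]
  choose lam' h0 hl using key
  exact ⟨lam', h0, fun w hw => hl w hw⟩

theorem struct_one : Struct (1 : TreeAut p) 0 1 (fun _ _ => 0) :=
  ⟨fun _ => rfl, fun v _ => ⟨1, Fini.one 1, by rw [dirA_zero, mul_one]; exact sectA_one v⟩⟩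

theorem struct_aAut : Struct (aAut p) 1 1 (fun _ _ => 0) := by
  refine ⟨fun _ => rfl, fun v hv => ⟨1, Fini.one 1, ?_⟩⟩
  rw [dirA_zero, mul_one]
  cases v with
  | nil => simp at hv
  | cons x u =>
    have hu : u = [] := by simpa using hv
    subst hu
    exact sectA_rootedAut _ x

theorem struct_bAut {r : ℕ} {e : ZMod p → Fin r → ZMod p} (he0 : e 0 = 0)
    (n : Fin r → ZMod p) :
    Struct (bAut e n) 0 1 (fun _ i => dotp n (e i)) := by
  have h0 : dotp n (e 0) = 0 := by simp [he0, dotp]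
  refine ⟨fun _ => h0, fun v hv => ⟨1, Fini.one 1, ?_⟩⟩
  have hv' : v = [] := List.length_eq_zero_iff.mp hv
  subst hv'
  rw [one_mul, sectA_nil, bAut_eq_dirA]
/-! ### Level sums and the germ invariant -/

section LSums

variable [NeZero p]

/-- Sum of a function over all words of length `D`. -/
def LSum : (D : ℕ) → (List (ZMod p) → ZMod p) → ZMod p
  | 0, F => F []
  | D + 1, F => LSum D fun v => ∑ x : ZMod p, F (v ++ [x])

theorem LSum_zero_eq (F : List (ZMod p) → ZMod p) : LSum 0 F = F [] := rfl

theorem LSum_succ (D : ℕ) (F : List (ZMod p) → ZMod p) :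
    LSum (D + 1) F = LSum D fun v => ∑ x : ZMod p, F (v ++ [x]) := rfl

theorem LSum_congr {D : ℕ} {F F' : List (ZMod p) → ZMod p}
    (h : ∀ v : List (ZMod p), v.length = D → F v = F' v) : LSum D F = LSum D F' := by
  induction D generalizing F F' with
  | zero => exact h [] rfl
  | succ D ih =>
    rw [LSum_succ, LSum_succ]
    exact ih fun v hv => Finset.sum_congr rfl fun x _ => h (v ++ [x]) (by simp [hv])

theorem LSum_add (D : ℕ) (F G : List (ZMod p) → ZMod p) :
    LSum D (fun v => F v + G v) = LSum D F + LSum D G := by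
  induction D generalizing F G with
  | zero => rfl
  | succ D ih =>
    rw [LSum_succ, LSum_succ, LSum_succ, ← ih]
    exact LSum_congr fun v _ => Finset.sum_add_distrib

theorem LSum_of_zero (D : ℕ) : LSum D (fun _ => (0 : ZMod p)) = 0 := by
  induction D with
  | zero => rfl
  | succ D ih =>
    rw [LSum_succ]
    have h : LSum D (fun v : List (ZMod p) => ∑ _x : ZMod p, (0 : ZMod p))
        = LSum D (fun _ => (0 : ZMod p)) := LSum_congr fun v _ => by simp
    rw [h, ih]

theorem LSum_append (D m : ℕ) (F : List (ZMod p) → ZMod p) :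
    LSum (D + m) F = LSum D fun v => LSum m fun u => F (v ++ u) := by
  induction m generalizing F with
  | zero =>
    show LSum D F = LSum D fun v => F (v ++ [])
    exact LSum_congr fun v _ => by rw [List.append_nil]
  | succ m ih =>
    rw [show D + (m + 1) = (D + m) + 1 from rfl, LSum_succ, ih]
    exact LSum_congr fun v _ => (LSum_congr fun u _ =>
      Finset.sum_congr rfl fun x _ => by rw [List.append_assoc]).symm.symm
  -- note: inner shapes

theorem LSum_indicator (m : ℕ) (c : ZMod p) :
    LSum m (fun u => if ∀ x ∈ u, x = 0 then c else 0) = c := by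
  induction m with
  | zero => simp [LSum_zero_eq]
  | succ m ih =>
    rw [LSum_succ]
    have hsimp : ∀ v : List (ZMod p),
        (∑ x : ZMod p, if ∀ y ∈ v ++ [x], y = 0 then c else 0)
          = (if ∀ y ∈ v, y = 0 then c else 0) := by
      intro v
      have h1 : ∀ x : ZMod p, (if ∀ y ∈ v ++ [x], y = 0 then c else 0)
          = (if ∀ y ∈ v, y = 0 then (if x = 0 then c else 0) else 0) := by
        intro x
        have hiff : (∀ y ∈ v ++ [x], y = 0) ↔ ((∀ y ∈ v, y = 0) ∧ x = 0) := by
          constructor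
          · intro h
            exact ⟨fun y hy => h y (List.mem_append_left _ hy),
              h x (List.mem_append_right _ (by simp))⟩
          · rintro ⟨h, rfl⟩ y hy
            rcases List.mem_append.mp hy with h' | h'
            · exact h y h'
            · simpa using h'
        by_cases hv : ∀ y ∈ v, y = 0 <;> by_cases hx : x = 0
        · rw [if_pos (hiff.mpr ⟨hv, hx⟩), if_pos hv, if_pos hx]
        · rw [if_neg (fun hc => hx (hiff.mp hc).2), if_pos hv, if_neg hx]
        · rw [if_neg (fun hc => hv (hiff.mp hc).1), if_neg hv]
        · rw [if_neg (fun hc => hv (hiff.mp hc).1), if_neg hv]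
      rw [Finset.sum_congr rfl fun x _ => h1 x]
      by_cases hv : ∀ y ∈ v, y = 0 <;> simp [hv]
    rw [LSum_congr fun v _ => hsimp v, ih]

theorem LSum_pact (h : TreeAut p) (D : ℕ) (F : List (ZMod p) → ZMod p) :
    LSum D (fun v => F (pact h v)) = LSum D F := by
  induction D generalizing h F with
  | zero => rfl
  | succ D ih =>
    rw [LSum_succ, LSum_succ]
    have hp : ∀ (v : List (ZMod p)) (x : ZMod p),
        pact h (v ++ [x]) = pact h v ++ [h v x] := by
      intro v x
      rw [pact_append, pact_singleton]
      have hsv : sectA h v [] = h v := by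
        show h (v ++ []) = h v
        rw [List.append_nil]
      rw [hsv]
    have hstep : LSum D (fun v => ∑ x : ZMod p, F (pact h (v ++ [x])))
        = LSum D (fun v => ∑ x : ZMod p, F (pact h v ++ [x])) := by
      refine LSum_congr fun v _ => ?_
      rw [Finset.sum_congr rfl fun x _ => by rw [hp v x]]
      exact Fintype.sum_equiv (h v) _ _ fun x => rfl
    rw [hstep]
    exact ih h fun u => ∑ x : ZMod p, F (u ++ [x])

/-- The level-`D` germ invariant of `g` in direction `i`. -/
def Lami (g : TreeAut p) (D : ℕ) (i : ZMod p) : ZMod p :=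
  LSum D fun v => g (v ++ [i]) 0

/-- The total germ weight of a label system at level `D`. -/
def LamS (D : ℕ) (lam : List (ZMod p) → ZMod p → ZMod p) (i : ZMod p) : ZMod p :=
  LSum D fun v => lam v i

theorem Struct.lami {g : TreeAut p} {D E : ℕ} {lam} (hs : Struct g D E lam) {m : ℕ}
    (hm : E ≤ m) (i : ZMod p) : Lami g (D + m) i = LamS D lam i := by
  unfold Lami LamS
  rw [LSum_append]
  refine LSum_congr fun v hv => ?_
  have hpt : ∀ u : List (ZMod p), u.length = m →
      (g ((v ++ u) ++ [i])) 0 = (if ∀ x ∈ u, x = 0 then lam v i else 0) := by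
    intro u hu
    rw [List.append_assoc, hs.label hv (by omega) i]
    by_cases h : ∀ x ∈ u, x = 0
    · rw [if_pos h, if_pos h, addRight_apply, zero_add]
    · rw [if_neg h, if_neg h, Equiv.Perm.one_apply]
  rw [LSum_congr hpt]
  exact LSum_indicator m (lam v i)

theorem LamS_raise (D : ℕ) (lam : List (ZMod p) → ZMod p → ZMod p) (i : ZMod p) :
    LamS (D + 1) (raiseLam lam) i = LamS D lam i := by
  unfold LamS
  rw [LSum_succ]
  refine LSum_congr fun v _ => ?_
  have h1 : ∀ x : ZMod p, raiseLam lam (v ++ [x]) i = if x = 0 then lam v i else 0 := by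
    intro x
    by_cases hx : x = 0
    · subst hx; rw [raiseLam_concat_zero]; simp
    · rw [raiseLam_concat_ne lam v hx]; simp [hx]
  rw [Finset.sum_congr rfl fun x _ => h1 x]
  simp

theorem Struct.raiseManyS {g : TreeAut p} {D E : ℕ} {lam} (h : Struct g D E lam)
    (hE : 1 ≤ E) (m : ℕ) :
    ∃ lam', Struct g (D + m) E lam' ∧ ∀ i, LamS (D + m) lam' i = LamS D lam i := by
  induction m with
  | zero => exact ⟨lam, h, fun _ => rfl⟩
  | succ m ih =>
    obtain ⟨lam', h', hS⟩ := ih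
    exact ⟨raiseLam lam', h'.raise hE, fun i => by
      rw [show D + (m + 1) = (D + m) + 1 from rfl, LamS_raise]; exact hS i⟩

theorem Struct.upgrade {g : TreeAut p} {Dg Eg : ℕ} {lam} (h : Struct g Dg Eg lam)
    (hEg : 1 ≤ Eg) {D E : ℕ} (hD : Dg ≤ D) (hE : Eg ≤ E) :
    ∃ lam', Struct g D E lam' ∧ ∀ i, LamS D lam' i = LamS Dg lam i := by
  obtain ⟨lam', h', hS⟩ := (h.monoE hE).raiseManyS (hEg.trans hE) (D - Dg)
  have heq : Dg + (D - Dg) = D := by omega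
  rw [heq] at h' hS
  exact ⟨lam', h', hS⟩

end LSums
section Invariant

variable [NeZero p]

theorem lami_mul_pointwise {g h : TreeAut p} {D E : ℕ} {lamg lamh}
    (hg : Struct g D E lamg) (hh : Struct h D E lamh) (hE : 1 ≤ E) (i : ZMod p)
    {w : List (ZMod p)} (hw : w.length = D + 2 * E) :
    ((g * h) (w ++ [i])) 0 = (g (pact h w ++ [i])) 0 + (h (w ++ [i])) 0 := by
  have hsplit : w = w.take D ++ w.drop D := (List.take_append_drop D w).symm
  have hv₀ : (w.take D).length = D := by simp; omega
  have hu : (w.drop D).length = 2 * E := by simp; omega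
  obtain ⟨f₂, hf₂, hs₂⟩ := hh.2 (w.take D) hv₀
  have hlabH := hh.label (u := w.drop D) hv₀ (show E ≤ (w.drop D).length + 1 by omega) i
  rw [← List.append_assoc, ← hsplit] at hlabH
  have hlabW := hh.label' (u := w.drop D) hv₀ (show E ≤ (w.drop D).length by omega)
  rw [← hsplit] at hlabW
  have hpact1 : pact h (w ++ [i]) = pact h w ++ [h w i] := by
    rw [pact_append, pact_singleton]
    have hsv : sectA h w [] = h w := by
      show h (w ++ []) = h w
      rw [List.append_nil]
    rw [hsv]
  have hpact2 : pact h w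
      = pact h (w.take D) ++ pact f₂ (pact (dirA (lamh (w.take D))) (w.drop D)) := by
    conv_lhs => rw [hsplit]
    rw [pact_append, hs₂, pact_mul]
  have hP : (pact h (w.take D)).length = D := by rw [pact_length]; exact hv₀
  have hu' : (pact f₂ (pact (dirA (lamh (w.take D))) (w.drop D))).length = 2 * E := by
    rw [pact_length, pact_length]; exact hu
  have hG := fun x : ZMod p => hg.label
    (u := pact f₂ (pact (dirA (lamh (w.take D))) (w.drop D))) hP
    (show E ≤ (pact f₂ (pact (dirA (lamh (w.take D))) (w.drop D))).length + 1 by omega) x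
  rw [TreeAut.mul_def, hpact1, hpact2, hlabW, hlabH]
  simp only [List.append_assoc]
  by_cases hdl : ∀ x ∈ (w.drop D).dropLast, x = 0
  case neg =>
    have hnz : ¬ ∀ x ∈ w.drop D, x = 0 :=
      fun hc => hdl fun x hx => hc x ((List.dropLast_sublist _).subset hx)
    rw [dirA_junk hdl, if_neg hnz, mul_one, hG _, hG _]
    by_cases hz : ∀ y ∈ pact f₂ (pact (dirA (lamh (w.take D))) (w.drop D)), y = 0
    · rw [if_pos hz, if_pos hz]
      simp only [Equiv.Perm.mul_apply, Equiv.Perm.one_apply, addRight_apply]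
      ring
    · rw [if_neg hz, if_neg hz]
      simp only [Equiv.Perm.mul_apply, Equiv.Perm.one_apply, addRight_apply]
      ring
  case pos =>
    have hune : w.drop D ≠ [] := by
      intro h0; rw [h0] at hu; simp at hu; omega
    obtain ⟨u₀, j, huj⟩ := (List.eq_nil_or_concat' (w.drop D)).resolve_left hune
    rw [huj, List.dropLast_concat] at hdl
    have hdir : dirA (lamh (w.take D)) (w.drop D) = Equiv.addRight (lamh (w.take D) j) := by
      rw [huj, dirA_concat, if_pos hdl]
    have hu₀len : u₀.length + 1 = 2 * E := by rw [huj] at hu; simpa using hu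
    by_cases hj : j = 0
    · subst hj
      have hall : ∀ x ∈ w.drop D, x = 0 := by
        rw [huj]; intro x hx
        rcases List.mem_append.mp hx with h' | h'
        · exact hdl x h'
        · simpa using h'
      rw [hdir, if_pos hall, hh.1 (w.take D), addRight_zero, hG _, hG _]
      by_cases hz : ∀ y ∈ pact f₂ (pact (dirA (lamh (w.take D))) (w.drop D)), y = 0
      · rw [if_pos hz, if_pos hz]
        simp only [Equiv.Perm.mul_apply, Equiv.Perm.one_apply, addRight_apply]
        ring
      · rw [if_neg hz, if_neg hz]
        simp only [Equiv.Perm.mul_apply, Equiv.Perm.one_apply, addRight_apply]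
        ring
    · have hnz : ¬ ∀ x ∈ w.drop D, x = 0 := by
        rw [huj]; intro hc; exact hj (hc j (by simp))
      have hu'form : pact f₂ (pact (dirA (lamh (w.take D))) (w.drop D))
          = pact f₂ u₀ ++ [j] := by
        rw [huj, pact_dirA_ray (hh.1 (w.take D)) hdl j, pact_fini_split hf₂ (by omega) [j]]
      have hz : ¬ ∀ y ∈ pact f₂ (pact (dirA (lamh (w.take D))) (w.drop D)), y = 0 := by
        rw [hu'form]; intro hc; exact hj (hc j (by simp))
      rw [hdir, if_neg hnz, mul_one, hG _, hG _, if_neg hz, if_neg hz]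
      simp only [Equiv.Perm.one_apply]
      ring

theorem lami_mul {g h : TreeAut p} {D E : ℕ} {lamg lamh}
    (hg : Struct g D E lamg) (hh : Struct h D E lamh) (hE : 1 ≤ E) (i : ZMod p) :
    Lami (g * h) (D + 2 * E) i = LamS D lamg i + LamS D lamh i := by
  have h1 : Lami (g * h) (D + 2 * E) i
      = LSum (D + 2 * E) fun w => (g (pact h w ++ [i])) 0 + (h (w ++ [i])) 0 :=
    LSum_congr fun w hw => lami_mul_pointwise hg hh hE i hw
  rw [h1, LSum_add]
  congr 1
  · have h2 : LSum (D + 2 * E) (fun w => (g (pact h w ++ [i])) 0)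
        = LSum (D + 2 * E) fun w => (g (w ++ [i])) 0 :=
      LSum_pact h (D + 2 * E) fun z => (g (z ++ [i])) 0
    rw [h2]
    exact hg.lami (by omega) i
  · exact hh.lami (by omega) i

/-! ### Eventual germ values -/

/-- `g` has eventually-constant germ invariant `c`. -/
def EvC (g : TreeAut p) (c : ZMod p → ZMod p) : Prop :=
  ∃ N, ∀ D, N ≤ D → ∀ i, Lami g D i = c i

theorem Struct.evc {g : TreeAut p} {D E : ℕ} {lam} (h : Struct g D E lam) :
    EvC g fun i => LamS D lam i :=
  ⟨D + E, fun D' hD' i => by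
    rw [show D' = D + (D' - D) by omega]
    exact h.lami (by omega) i⟩

theorem EvC.unique {g : TreeAut p} {c c'} (h : EvC g c) (h' : EvC g c') : c = c' := by
  obtain ⟨N, hN⟩ := h
  obtain ⟨N', hN'⟩ := h'
  funext i
  rw [← hN (max N N') (le_max_left _ _) i, hN' (max N N') (le_max_right _ _) i]

/-- `g` is structured at some depth. -/
def HasS (g : TreeAut p) : Prop := ∃ D E lam, 1 ≤ E ∧ Struct g D E lam

theorem HasS.evc {g : TreeAut p} (h : HasS g) : ∃ c, EvC g c := by
  obtain ⟨D, E, lam, _, hs⟩ := h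
  exact ⟨_, hs.evc⟩

theorem HasS.one : HasS (1 : TreeAut p) := ⟨0, 1, _, le_refl 1, struct_one⟩

theorem hasS_common {g h : TreeAut p} (hg : HasS g) (hh : HasS h) :
    ∃ D E lamg lamh, 1 ≤ E ∧ Struct g D E lamg ∧ Struct h D E lamh := by
  obtain ⟨Dg, Eg, lamg, hEg, hsg⟩ := hg
  obtain ⟨Dh, Eh, lamh, hEh, hsh⟩ := hh
  obtain ⟨lamg', hsg', -⟩ := hsg.upgrade hEg (le_max_left Dg Dh) (le_max_left Eg Eh)
  obtain ⟨lamh', hsh', -⟩ := hsh.upgrade hEh (le_max_right Dg Dh) (le_max_right Eg Eh)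
  exact ⟨_, _, lamg', lamh', le_trans hEg (le_max_left _ _), hsg', hsh'⟩

theorem HasS.mul {g h : TreeAut p} (hg : HasS g) (hh : HasS h) : HasS (g * h) := by
  obtain ⟨D, E, lamg, lamh, hE, hsg, hsh⟩ := hasS_common hg hh
  obtain ⟨lam, hs⟩ := hsg.mul hsh hE
  exact ⟨_, _, lam, le_refl 1, hs⟩

theorem HasS.inv {g : TreeAut p} (hg : HasS g) : HasS g⁻¹ := by
  obtain ⟨D, E, lam, hE, hs⟩ := hg
  obtain ⟨lam', hs'⟩ := hs.inv hE
  exact ⟨_, _, lam', le_refl 1, hs'⟩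

theorem EvC.one : EvC (1 : TreeAut p) fun _ => 0 := by
  refine ⟨0, fun D _ i => ?_⟩
  unfold Lami
  have h : ∀ v : List (ZMod p), v.length = D → ((1 : TreeAut p) (v ++ [i])) 0 = 0 := by
    intro v _
    rw [TreeAut.one_def, Equiv.Perm.one_apply]
  rw [LSum_congr h, LSum_of_zero]

theorem EvC.mul {g h : TreeAut p} {cg ch} (hg : HasS g) (hh : HasS h)
    (hcg : EvC g cg) (hch : EvC h ch) : EvC (g * h) fun i => cg i + ch i := by
  obtain ⟨D, E, lamg, lamh, hE, hsg, hsh⟩ := hasS_common hg hh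
  obtain ⟨lamm, hsm⟩ := hsg.mul hsh hE
  have hval : ∀ i, LamS (D + (E + 1)) lamm i = cg i + ch i := by
    intro i
    obtain ⟨lamg'', hsg'', hSg⟩ := hsg.upgrade hE (show D ≤ D + E + 2 by omega) (le_refl E)
    obtain ⟨lamh'', hsh'', hSh⟩ := hsh.upgrade hE (show D ≤ D + E + 2 by omega) (le_refl E)
    have h10 := lami_mul hsg'' hsh'' hE i
    have h9 := hsm.lami (m := 2 * E + 1) (by omega) i
    rw [show D + (E + 1) + (2 * E + 1) = D + E + 2 + 2 * E by omega] at h9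
    rw [hSg i, hSh i] at h10
    have hcg' := EvC.unique hcg hsg.evc
    have hch' := EvC.unique hch hsh.evc
    rw [congrFun hcg' i, congrFun hch' i]
    exact h9.symm.trans h10
  have hfun : (fun i => LamS (D + (E + 1)) lamm i) = fun i => cg i + ch i := funext hval
  exact hfun ▸ hsm.evc

theorem EvC.inv {g : TreeAut p} {c} (hg : HasS g) (hc : EvC g c) :
    EvC g⁻¹ fun i => -c i := by
  obtain ⟨c', hc'⟩ := hg.inv.evc
  have h1 : EvC (g * g⁻¹) fun i => c i + c' i := EvC.mul hg hg.inv hc hc'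
  rw [mul_inv_cancel] at h1
  have h2 := EvC.unique h1 EvC.one
  have h3 : c' = fun i => -c i := by
    funext i
    exact eq_neg_of_add_eq_zero_right (congrFun h2 i)
  exact h3 ▸ hc'

/-- The subgroup of structured automorphisms. -/
def SZ (p : ℕ) [NeZero p] : Subgroup (TreeAut p) where
  carrier := {g | HasS g}
  one_mem' := HasS.one
  mul_mem' := fun hg hh => hg.mul hh
  inv_mem' := fun hg => hg.inv

/-- The subgroup of structured automorphisms with vanishing germ invariant. -/
def ZZ (p : ℕ) [NeZero p] : Subgroup (TreeAut p) where
  carrier := {g | HasS g ∧ EvC g fun _ => 0}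
  one_mem' := ⟨HasS.one, EvC.one⟩
  mul_mem' := by
    rintro a b ⟨ha, hea⟩ ⟨hb, heb⟩
    refine ⟨ha.mul hb, ?_⟩
    have h := EvC.mul ha hb hea heb
    simpa using h
  inv_mem' := by
    rintro a ⟨ha, hea⟩
    refine ⟨ha.inv, ?_⟩
    have h := EvC.inv ha hea
    simpa using h

theorem bAut_mem_commutator {r : ℕ} {e : ZMod p → Fin r → ZMod p} (he0 : e 0 = 0)
    {μ : Fin r → ZMod p} (hb : bAut e μ ∈ ⁅GGS e, GGS e⁆) :
    ∀ i, dotp μ (e i) = 0 := by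
  have hGGS : GGS e ≤ SZ p := by
    rw [GGS, Subgroup.closure_le]
    rintro x (rfl | ⟨m, rfl⟩)
    · exact ⟨1, 1, _, le_refl 1, struct_aAut⟩
    · exact ⟨0, 1, _, le_refl 1, struct_bAut he0 m⟩
  have hcomm : ⁅GGS e, GGS e⁆ ≤ ZZ p := by
    rw [Subgroup.commutator_le]
    intro a ha b hb'
    have hA : HasS a := hGGS ha
    have hB : HasS b := hGGS hb'
    obtain ⟨ca, hca⟩ := hA.evc
    obtain ⟨cb, hcb⟩ := hB.evc
    have h1 := EvC.mul hA hB hca hcb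
    have h2 := EvC.mul (hA.mul hB) hA.inv h1 (EvC.inv hA hca)
    have h3 : EvC (a * b * a⁻¹ * b⁻¹) fun i => ca i + cb i + -ca i + -cb i :=
      EvC.mul ((hA.mul hB).mul hA.inv) hB.inv h2 (EvC.inv hB hcb)
    have hc0 : (fun i => ca i + cb i + -ca i + -cb i) = fun _ => (0 : ZMod p) := by
      funext i; ring
    rw [hc0] at h3
    show ⁅a, b⁆ ∈ ZZ p
    rw [commutatorElement_def]
    exact ⟨((hA.mul hB).mul hA.inv).mul hB.inv, h3⟩
  obtain ⟨-, hev⟩ := hcomm hb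
  have hevb : EvC (bAut e μ) fun i => dotp μ (e i) := (struct_bAut he0 μ).evc
  have hu := EvC.unique hevb hev
  intro i
  exact congrFun hu i

end Invariant
/-! ### The root homomorphism and generator computations -/

/-- The root label, as a homomorphism to `Sym(X)`. -/
def root0 (p : ℕ) : TreeAut p →* Equiv.Perm (ZMod p) where
  toFun g := g []
  map_one' := rfl
  map_mul' _ _ := rfl

theorem aAut_pow (m : ℕ) : aAut p ^ m = rootedAut (Equiv.addRight (m : ZMod p)) := by
  rw [show aAut p = rootedAut (Equiv.addRight (1 : ZMod p)) from rfl, rootedAut_pow,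
    addRight_pow]

theorem aAut_pow_p [NeZero p] : aAut p ^ p = 1 := by
  rw [aAut_pow, ZMod.natCast_self, addRight_zero, rootedAut_one]

theorem dotp_zero_left {r : ℕ} (v : Fin r → ZMod p) : dotp 0 v = 0 := by
  simp [dotp]

theorem dotp_zero_right {r : ℕ} (n : Fin r → ZMod p) : dotp n 0 = 0 := by
  simp [dotp]

theorem dotp_add_left {r : ℕ} (n m v : Fin r → ZMod p) :
    dotp (n + m) v = dotp n v + dotp m v := by
  simp [dotp, add_mul, Finset.sum_add_distrib]

theorem dotp_neg_left {r : ℕ} (n v : Fin r → ZMod p) : dotp (-n) v = -dotp n v := by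
  simp [dotp]

theorem bAut_mul {r : ℕ} {e : ZMod p → Fin r → ZMod p} (he0 : e 0 = 0)
    (n m : Fin r → ZMod p) : bAut e n * bAut e m = bAut e (n + m) := by
  rw [bAut_eq_dirA e n, bAut_eq_dirA e m, bAut_eq_dirA e (n + m),
    dirA_mul (by rw [he0, dotp_zero_right])]
  have h : (fun i => dotp n (e i) + dotp m (e i)) = fun i => dotp (n + m) (e i) := by
    funext i
    rw [dotp_add_left]
  rw [h]

theorem bAut_zero {r : ℕ} (e : ZMod p → Fin r → ZMod p) : bAut e 0 = 1 := by
  rw [bAut_eq_dirA]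
  have h : (fun i => dotp (0 : Fin r → ZMod p) (e i)) = fun _ => (0 : ZMod p) := by
    funext i
    exact dotp_zero_left _
  rw [h, dirA_zero]

theorem bAut_inv {r : ℕ} {e : ZMod p → Fin r → ZMod p} (he0 : e 0 = 0)
    (n : Fin r → ZMod p) : (bAut e n)⁻¹ = bAut e (-n) := by
  rw [inv_eq_iff_mul_eq_one, bAut_mul he0, add_neg_cancel, bAut_zero]

/-! ### First-level sections -/

theorem sect_eq_sectA (g : TreeAut p) (k : ZMod p) : sect g k = sectA g [k] := rfl

theorem sect_mul (g h : TreeAut p) (k : ZMod p) :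
    sect (g * h) k = sect g (h [] k) * sect h k := by
  rw [sect_eq_sectA, sect_eq_sectA, sect_eq_sectA, sectA_mul, pact_singleton]

theorem sect_inv (g : TreeAut p) (k : ZMod p) :
    sect g⁻¹ k = (sect g ((g [])⁻¹ k))⁻¹ := by
  have hp : pact g⁻¹ [k] = [(g [])⁻¹ k] := by
    rw [pact_singleton]
    rfl
  rw [sect_eq_sectA, sectA_inv, hp]
  rfl

theorem sect_aAut (k : ZMod p) : sect (aAut p) k = 1 := by
  funext v
  show rootedAut (Equiv.addRight (1 : ZMod p)) (k :: v) = (1 : TreeAut p) v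
  rw [rootedAut_cons, TreeAut.one_def]

theorem sect_bAut {r : ℕ} {e : ZMod p → Fin r → ZMod p} (he0 : e 0 = 0)
    (m : Fin r → ZMod p) (k : ZMod p) :
    sect (bAut e m) k
      = if k = 0 then bAut e m else rootedAut (Equiv.addRight (dotp m (e k))) := by
  have h0 : dotp m (e 0) = 0 := by rw [he0, dotp_zero_right]
  rw [bAut_eq_dirA, sect_eq_sectA]
  by_cases hk : k = 0
  · subst hk
    rw [if_pos rfl, sectA_dirA_allzero h0 (by simp)]
  · rw [if_neg hk]
    have h := sectA_dirA_ray (lam := fun i => dotp m (e i)) h0 (u := []) (by simp) hk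
    simpa using h

theorem cAut_nil {r : ℕ} (e : ZMod p → Fin r → ZMod p) : cAut e [] = 1 := by
  unfold cAut embAt
  rw [if_neg (by simp : ¬ (List.replicate 1 (0 : ZMod p) <+: ([] : List (ZMod p))))]

theorem sect_cAut {r : ℕ} (e : ZMod p → Fin r → ZMod p) (k : ZMod p) :
    sect (cAut e) k
      = if k = 0 then ⁅bAut e fun j => if (j : ℕ) = 0 then 1 else 0, aAut p⁆ else 1 := by
  funext v
  show cAut e (k :: v) = _
  unfold cAut embAt
  rw [List.replicate_one]
  by_cases hk : k = 0
  · subst hk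
    rw [if_pos (List.cons_prefix_cons.mpr ⟨rfl, List.nil_prefix⟩), if_pos rfl]
    rfl
  · rw [if_neg (fun hpre => hk (List.cons_prefix_cons.mp hpre).1.symm), if_neg hk,
      TreeAut.one_def]

/-! ### Membership and commutator facts -/

theorem mem_GGS_aAut {r : ℕ} (e : ZMod p → Fin r → ZMod p) : aAut p ∈ GGS e :=
  Subgroup.subset_closure (Or.inl rfl)

theorem mem_GGS_bAut {r : ℕ} (e : ZMod p → Fin r → ZMod p) (n : Fin r → ZMod p) :
    bAut e n ∈ GGS e :=
  Subgroup.subset_closure (Or.inr ⟨n, rfl⟩)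

theorem comm_le_GGS {r : ℕ} (e : ZMod p → Fin r → ZMod p) : ⁅GGS e, GGS e⁆ ≤ GGS e := by
  rw [Subgroup.commutator_le]
  intro a ha b hb
  rw [commutatorElement_def]
  exact mul_mem (mul_mem (mul_mem ha hb) (inv_mem ha)) (inv_mem hb)

theorem GGS_root {r : ℕ} (e : ZMod p → Fin r → ZMod p) :
    GGS e ≤ Subgroup.comap (root0 p) (Subgroup.zpowers (Equiv.addRight (1 : ZMod p))) := by
  rw [GGS, Subgroup.closure_le]
  rintro x (rfl | ⟨m, rfl⟩)
  · exact Subgroup.mem_zpowers _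
  · have h1 : (root0 p) (bAut e m) ∈ Subgroup.zpowers (Equiv.addRight (1 : ZMod p)) := by
      rw [show root0 p (bAut e m) = 1 from rfl]
      exact one_mem _
    exact SetLike.mem_coe.mpr (Subgroup.mem_comap.mpr h1)

theorem comm_root {r : ℕ} (e : ZMod p → Fin r → ZMod p) {x : TreeAut p}
    (hx : x ∈ ⁅GGS e, GGS e⁆) : x [] = 1 := by
  have hker : ⁅GGS e, GGS e⁆ ≤ (root0 p).ker := by
    rw [Subgroup.commutator_le]
    intro a ha b hb
    rw [MonoidHom.mem_ker, map_commutatorElement]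
    obtain ⟨k, hk⟩ := Subgroup.mem_zpowers_iff.mp (Subgroup.mem_comap.mp (GGS_root e ha))
    obtain ⟨l, hl⟩ := Subgroup.mem_zpowers_iff.mp (Subgroup.mem_comap.mp (GGS_root e hb))
    have hcomm : Commute (root0 p a) (root0 p b) := by
      rw [← hk, ← hl]
      exact (Commute.refl _).zpow_zpow k l
    exact commutatorElement_eq_one_iff_commute.mpr hcomm
  exact MonoidHom.mem_ker.mp (hker hx)

/-! ### The abelianization of the multi-GGS group -/

theorem mem_comm_iff {r : ℕ} (e : ZMod p → Fin r → ZMod p) (x : GGS e) :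
    x ∈ commutator (GGS e) ↔ (x : TreeAut p) ∈ ⁅GGS e, GGS e⁆ := by
  have hmap : Subgroup.map (GGS e).subtype ⁅(⊤ : Subgroup (GGS e)), ⊤⁆ = ⁅GGS e, GGS e⁆ := by
    rw [Subgroup.map_commutator, ← MonoidHom.range_eq_map, Subgroup.range_subtype]
  rw [commutator_def, ← hmap]
  constructor
  · exact fun h => Subgroup.mem_map_of_mem _ h
  · intro h
    obtain ⟨y, hy, hyx⟩ := Subgroup.mem_map.mp h
    rwa [show y = x from Subtype.ext hyx] at hy

theorem of_eq_one_iff {r : ℕ} (e : ZMod p → Fin r → ZMod p) {x : TreeAut p}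
    (hx : x ∈ GGS e) :
    Abelianization.of (⟨x, hx⟩ : GGS e) = 1 ↔ x ∈ ⁅GGS e, GGS e⁆ := by
  rw [show (Abelianization.of (⟨x, hx⟩ : GGS e) = 1)
      ↔ ((⟨x, hx⟩ : GGS e) ∈ commutator (GGS e)) from QuotientGroup.eq_one_iff _,
    mem_comm_iff]
/-! ### Decomposition bookkeeping modulo the derived subgroup -/

section Decomp

variable [NeZero p] {r : ℕ} {e : ZMod p → Fin r → ZMod p}

/-- `a` as an element of the multi-GGS group. -/
def aSub (e : ZMod p → Fin r → ZMod p) : GGS e := ⟨aAut p, mem_GGS_aAut e⟩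

/-- `b^m` as an element of the multi-GGS group. -/
def bSub (e : ZMod p → Fin r → ZMod p) (m : Fin r → ZMod p) : GGS e :=
  ⟨bAut e m, mem_GGS_bAut e m⟩

theorem aSub_pow_p : (aSub e) ^ p = 1 := by
  apply Subtype.ext
  show aAut p ^ p = 1
  exact aAut_pow_p

theorem aSub_pow_add (s t : ZMod p) :
    (aSub e) ^ (s + t).val = (aSub e) ^ s.val * (aSub e) ^ t.val := by
  rw [← pow_add, ZMod.val_add, ← pow_eq_pow_mod _ aSub_pow_p]

theorem bSub_mul (he0 : e 0 = 0) (n m : Fin r → ZMod p) :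
    bSub e n * bSub e m = bSub e (n + m) :=
  Subtype.ext (bAut_mul he0 n m)

theorem decomp_mem_comm (he0 : e 0 = 0) (s₁ s₂ : ZMod p)
    (n₁ n₂ : Fin r → ZMod p) {y₁ y₂ : TreeAut p}
    (hy₁ : y₁ ∈ ⁅GGS e, GGS e⁆) (hy₂ : y₂ ∈ ⁅GGS e, GGS e⁆) :
    (aAut p ^ (s₁ + s₂).val * bAut e (n₁ + n₂))⁻¹ *
      (aAut p ^ s₁.val * bAut e n₁ * y₁ * (aAut p ^ s₂.val * bAut e n₂ * y₂))
      ∈ ⁅GGS e, GGS e⁆ := by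
  set Y₁ : GGS e := ⟨y₁, comm_le_GGS e hy₁⟩ with hY₁
  set Y₂ : GGS e := ⟨y₂, comm_le_GGS e hy₂⟩ with hY₂
  set X : GGS e := (aSub e ^ (s₁ + s₂).val * bSub e (n₁ + n₂))⁻¹ *
    (aSub e ^ s₁.val * bSub e n₁ * Y₁ * (aSub e ^ s₂.val * bSub e n₂ * Y₂)) with hXdef
  have hXval : (X : TreeAut p) = (aAut p ^ (s₁ + s₂).val * bAut e (n₁ + n₂))⁻¹ *
      (aAut p ^ s₁.val * bAut e n₁ * y₁ * (aAut p ^ s₂.val * bAut e n₂ * y₂)) := by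
    simp [hXdef, aSub, bSub, hY₁, hY₂]
  rw [← hXval]
  refine (of_eq_one_iff e X.2).mp ?_
  rw [show (⟨(X : TreeAut p), X.2⟩ : GGS e) = X from rfl, hXdef,
    aSub_pow_add s₁ s₂, ← bSub_mul he0 n₁ n₂]
  have hy₁0 : Abelianization.of Y₁ = 1 := (of_eq_one_iff e _).mpr hy₁
  have hy₂0 : Abelianization.of Y₂ = 1 := (of_eq_one_iff e _).mpr hy₂
  simp only [map_mul, map_inv]
  rw [hy₁0, hy₂0, mul_one, mul_one, mul_mul_mul_comm, inv_mul_cancel]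

theorem decomp_inv_mem_comm (he0 : e 0 = 0) (s₁ : ZMod p)
    (n₁ : Fin r → ZMod p) {y₁ : TreeAut p} (hy₁ : y₁ ∈ ⁅GGS e, GGS e⁆) :
    (aAut p ^ (-s₁).val * bAut e (-n₁))⁻¹ * (aAut p ^ s₁.val * bAut e n₁ * y₁)⁻¹
      ∈ ⁅GGS e, GGS e⁆ := by
  set Y₁ : GGS e := ⟨y₁, comm_le_GGS e hy₁⟩ with hY₁
  set X : GGS e := (aSub e ^ (-s₁).val * bSub e (-n₁))⁻¹ *
    (aSub e ^ s₁.val * bSub e n₁ * Y₁)⁻¹ with hXdef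
  have hXval : (X : TreeAut p) = (aAut p ^ (-s₁).val * bAut e (-n₁))⁻¹ *
      (aAut p ^ s₁.val * bAut e n₁ * y₁)⁻¹ := by
    simp [hXdef, aSub, bSub, hY₁]
  rw [← hXval]
  refine (of_eq_one_iff e X.2).mp ?_
  rw [show (⟨(X : TreeAut p), X.2⟩ : GGS e) = X from rfl, hXdef]
  have hy₁0 : Abelianization.of Y₁ = 1 := (of_eq_one_iff e _).mpr hy₁
  have hk2 : Abelianization.of (aSub e ^ s₁.val) * Abelianization.of (aSub e ^ (-s₁).val)
      = 1 := by
    rw [← map_mul, ← aSub_pow_add s₁ (-s₁), add_neg_cancel, ZMod.val_zero, pow_zero, map_one]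
  have hb2 : Abelianization.of (bSub e n₁) * Abelianization.of (bSub e (-n₁)) = 1 := by
    rw [← map_mul, bSub_mul he0, add_neg_cancel,
      show bSub e (0 : Fin r → ZMod p) = 1 from Subtype.ext (bAut_zero e), map_one]
  simp only [map_mul, map_inv]
  rw [hy₁0, mul_one, ← mul_inv_rev, mul_mul_mul_comm, hk2, hb2, one_mul, inv_one]

theorem decomp_unique (he0 : e 0 = 0)
    (hli : LinearIndependent (ZMod p) fun j : Fin r => fun i : ZMod p => e i j)
    {s₁ s₂ : ZMod p} {n₁ n₂ : Fin r → ZMod p} {y₁ y₂ : TreeAut p}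
    (hy₁ : y₁ ∈ ⁅GGS e, GGS e⁆) (hy₂ : y₂ ∈ ⁅GGS e, GGS e⁆)
    (heq : aAut p ^ s₁.val * bAut e n₁ * y₁ = aAut p ^ s₂.val * bAut e n₂ * y₂) :
    s₁ = s₂ ∧ n₁ = n₂ := by
  have hra : root0 p (aAut p) = Equiv.addRight (1 : ZMod p) := rfl
  have hrb : ∀ m : Fin r → ZMod p, root0 p (bAut e m) = 1 := fun _ => rfl
  have hs : s₁ = s₂ := by
    have h1 := congrArg (root0 p) heq
    rw [map_mul, map_mul, map_mul, map_mul, map_pow, map_pow, hra, hrb, hrb,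
      show root0 p y₁ = 1 from comm_root e hy₁,
      show root0 p y₂ = 1 from comm_root e hy₂, mul_one, mul_one, mul_one, mul_one,
      addRight_pow, addRight_pow] at h1
    have h2 := congrArg (fun σ : Equiv.Perm (ZMod p) => σ 0) h1
    simp only [addRight_apply, zero_add] at h2
    rwa [ZMod.natCast_zmod_val, ZMod.natCast_zmod_val] at h2
  subst hs
  have h2 : bAut e n₁ * y₁ = bAut e n₂ * y₂ := by
    have h3 := heq
    rw [mul_assoc, mul_assoc] at h3
    exact mul_left_cancel h3
  have h4 : (bAut e n₂)⁻¹ * bAut e n₁ * y₁ = y₂ := by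
    rw [mul_assoc, h2, ← mul_assoc, inv_mul_cancel, one_mul]
  have h5 : bAut e (-n₂ + n₁) = y₂ * y₁⁻¹ := by
    rw [← bAut_mul he0 (-n₂) n₁, ← bAut_inv he0 n₂, ← h4,
      mul_assoc ((bAut e n₂)⁻¹ * bAut e n₁) y₁ y₁⁻¹, mul_inv_cancel, mul_one]
  have h6 : bAut e (-n₂ + n₁) ∈ ⁅GGS e, GGS e⁆ := by
    rw [h5]
    exact mul_mem hy₂ (inv_mem hy₁)
  have h7 := bAut_mem_commutator he0 h6
  refine ⟨rfl, ?_⟩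
  have hli' := Fintype.linearIndependent_iff.mp hli
  have hsum0 : (∑ j, (fun j => (-n₂ + n₁) j) j • fun i : ZMod p => e i j) = 0 := by
    funext i
    simp only [Finset.sum_apply, Pi.smul_apply, smul_eq_mul, Pi.zero_apply]
    exact h7 i
  have h8 := hli' (fun j => (-n₂ + n₁) j) hsum0
  funext j
  have h10 : -(n₂ j) + n₁ j = 0 := by simpa using h8 j
  rw [show -(n₂ j) + n₁ j = n₁ j - n₂ j from by ring] at h10
  exact sub_eq_zero.mp h10

end Decomp

end MGGS

/-- Let `G` be a non-constant multi-GGS group and `g ∈ Stab_{G_reg}(1)` with first-layer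
sections `g|_k = a^{s_k} b^{n_k} y_k`, where `n_k ∈ 𝔽_p^r` and `y_k ∈ G'`.  Then the
`A`-exponents are forced: `s_k = Σ_{i=0}^{p-1} n_i · e_{k-i}` for each `k`, where `e_j` is the
`j`-th column of the defining matrix `E` (with `e_0 = 0`, indices mod `p`). -/
theorem forced_A_coordinates (p r : ℕ) [Fact p.Prime] [NeZero p] (hp : Odd p)
    (e : ZMod p → Fin r → ZMod p) (he0 : e 0 = 0) (hnc : NonConstant e)
    (g : TreeAut p) (hg : g ∈ GGSreg e) (hstab : g [] = 1)
    (s : ZMod p → ZMod p) (n : ZMod p → Fin r → ZMod p) (y : ZMod p → TreeAut p)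
    (hy : ∀ k : ZMod p, y k ∈ ⁅GGS e, GGS e⁆)
    (hsec : ∀ k : ZMod p, sect g k = aAut p ^ (s k).val * bAut e (n k) * y k) :
    ∀ k : ZMod p, s k = ∑ i : ZMod p, dotp (n i) (e (k - i)) := by
  classical
  have hli := hnc.2
  have main : ∀ x, x ∈ GGSreg e → ∃ (t : ZMod p) (s' : ZMod p → ZMod p)
      (n' : ZMod p → Fin r → ZMod p) (y' : ZMod p → TreeAut p),
      x [] = Equiv.addRight t ∧ (∀ k, y' k ∈ ⁅GGS e, GGS e⁆) ∧
      (∀ k, sect x k = aAut p ^ (s' k).val * bAut e (n' k) * y' k) ∧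
      (∀ k, s' k = ∑ i : ZMod p, dotp (n' i) (e (k - i))) := by
    intro x hx
    have hx' : x ∈ Subgroup.closure ({aAut p, cAut e} ∪ Set.range (bAut e)) := hx
    clear hx
    induction hx' using Subgroup.closure_induction with
    | mem z hz =>
      rcases hz with (rfl | rfl) | ⟨m, rfl⟩
      · -- z = aAut p
        refine ⟨1, fun _ => 0, fun _ => 0, fun _ => 1, rfl, fun _ => one_mem _, ?_, ?_⟩
        · intro k
          beta_reduce
          rw [MGGS.sect_aAut, ZMod.val_zero, pow_zero, MGGS.bAut_zero, one_mul, mul_one]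
        · intro k
          beta_reduce
          simp [MGGS.dotp_zero_left]
      · -- z = cAut e
        refine ⟨0, fun _ => 0, fun _ => 0,
          fun k => if k = 0 then ⁅bAut e fun j => if (j : ℕ) = 0 then 1 else 0, aAut p⁆
            else 1, ?_, ?_, ?_, ?_⟩
        · rw [MGGS.cAut_nil e, MGGS.addRight_zero]
        · intro k
          beta_reduce
          by_cases hk : k = 0
          · rw [if_pos hk]
            exact Subgroup.commutator_mem_commutator (MGGS.mem_GGS_bAut e _)
              (MGGS.mem_GGS_aAut e)
          · rw [if_neg hk]
            exact one_mem _
        · intro k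
          beta_reduce
          rw [MGGS.sect_cAut, ZMod.val_zero, pow_zero, MGGS.bAut_zero, one_mul, one_mul]
        · intro k
          beta_reduce
          simp [MGGS.dotp_zero_left]
      · -- z = bAut e m
        refine ⟨0, fun k => dotp m (e k), fun k => if k = 0 then m else 0, fun _ => 1,
          ?_, fun _ => one_mem _, ?_, ?_⟩
        · rw [show bAut e m [] = 1 from rfl, MGGS.addRight_zero]
        · intro k
          beta_reduce
          rw [MGGS.sect_bAut he0 m k, mul_one]
          by_cases hk : k = 0
          · subst hk
            rw [if_pos rfl, if_pos rfl, he0, MGGS.dotp_zero_right, ZMod.val_zero,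
              pow_zero, one_mul]
          · rw [if_neg hk, if_neg hk, MGGS.bAut_zero, mul_one, MGGS.aAut_pow,
              ZMod.natCast_zmod_val]
        · intro k
          beta_reduce
          have hterm : ∀ i : ZMod p, dotp (if i = 0 then m else 0) (e (k - i))
              = if i = 0 then dotp m (e (k - i)) else 0 := by
            intro i
            split
            · rfl
            · exact MGGS.dotp_zero_left _
          rw [Finset.sum_congr rfl fun i _ => hterm i,
            Finset.sum_ite_eq' Finset.univ (0 : ZMod p) fun i => dotp m (e (k - i))]
          simp
    | one =>
      refine ⟨0, fun _ => 0, fun _ => 0, fun _ => 1, ?_, fun _ => one_mem _, ?_, ?_⟩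
      · rw [MGGS.addRight_zero]
        rfl
      · intro k
        beta_reduce
        rw [ZMod.val_zero, pow_zero, MGGS.bAut_zero, one_mul, mul_one]
        rfl
      · intro k
        beta_reduce
        simp [MGGS.dotp_zero_left]
    | mul x z hxc hzc ihx ihz =>
      obtain ⟨t₁, s₁, n₁, y₁, hr₁, hy₁, hs₁, hm₁⟩ := ihx
      obtain ⟨t₂, s₂, n₂, y₂, hr₂, hy₂, hs₂, hm₂⟩ := ihz
      refine ⟨t₂ + t₁, fun k => s₁ (k + t₂) + s₂ k, fun k => n₁ (k + t₂) + n₂ k,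
        fun k => (aAut p ^ (s₁ (k + t₂) + s₂ k).val * bAut e (n₁ (k + t₂) + n₂ k))⁻¹ *
          sect (x * z) k, ?_, ?_, ?_, ?_⟩
      · show x (pact z []) * z [] = _
        rw [show pact z [] = ([] : List (ZMod p)) from rfl, hr₁, hr₂, MGGS.addRight_mul]
      · intro k
        beta_reduce
        have hsxz : sect (x * z) k = sect x (k + t₂) * sect z k := by
          rw [MGGS.sect_mul, hr₂, MGGS.addRight_apply]
        rw [hsxz, hs₁ (k + t₂), hs₂ k]
        exact MGGS.decomp_mem_comm he0 _ _ _ _ (hy₁ _) (hy₂ k)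
      · intro k
        beta_reduce
        rw [mul_inv_cancel_left]
      · intro k
        beta_reduce
        have hsplit : ∀ i : ZMod p, dotp (n₁ (i + t₂) + n₂ i) (e (k - i))
            = dotp (n₁ (i + t₂)) (e (k - i)) + dotp (n₂ i) (e (k - i)) :=
          fun i => MGGS.dotp_add_left _ _ _
        rw [Finset.sum_congr rfl fun i _ => hsplit i, Finset.sum_add_distrib,
          hm₁ (k + t₂), hm₂ k]
        congr 1
        refine Fintype.sum_equiv (Equiv.addRight (-t₂)) _ _ fun i => ?_
        rw [MGGS.addRight_apply,
          show i + -t₂ + t₂ = i from by ring,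
          show k - (i + -t₂) = k + t₂ - i from by ring]
    | inv x hxc ihx =>
      obtain ⟨t₁, s₁, n₁, y₁, hr₁, hy₁, hs₁, hm₁⟩ := ihx
      refine ⟨-t₁, fun k => -(s₁ (k - t₁)), fun k => -(n₁ (k - t₁)),
        fun k => (aAut p ^ (-(s₁ (k - t₁))).val * bAut e (-(n₁ (k - t₁))))⁻¹ *
          sect x⁻¹ k, ?_, ?_, ?_, ?_⟩
      · show (x (pactInv x []))⁻¹ = _
        rw [show pactInv x [] = ([] : List (ZMod p)) from rfl, hr₁, MGGS.addRight_inv]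
      · intro k
        beta_reduce
        have hsx : sect x⁻¹ k = (sect x (k - t₁))⁻¹ := by
          rw [MGGS.sect_inv, hr₁, MGGS.addRight_inv, MGGS.addRight_apply,
            ← sub_eq_add_neg]
        rw [hsx, hs₁ (k - t₁)]
        exact MGGS.decomp_inv_mem_comm he0 _ _ (hy₁ _)
      · intro k
        beta_reduce
        rw [mul_inv_cancel_left]
      · intro k
        beta_reduce
        have hneg : ∀ i : ZMod p, dotp (-(n₁ (i - t₁))) (e (k - i))
            = -dotp (n₁ (i - t₁)) (e (k - i)) := fun i => MGGS.dotp_neg_left _ _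
        rw [Finset.sum_congr rfl fun i _ => hneg i, Finset.sum_neg_distrib, neg_inj,
          hm₁ (k - t₁)]
        refine Fintype.sum_equiv (Equiv.addRight t₁) _ _ fun i => ?_
        rw [MGGS.addRight_apply,
          show i + t₁ - t₁ = i from by ring,
          show k - (i + t₁) = k - t₁ - i from by ring]
  obtain ⟨t, s', n', y', hroot', hy', hsec', hsum'⟩ := main g hg
  have huniq : ∀ k : ZMod p, s k = s' k ∧ n k = n' k := fun k =>
    MGGS.decomp_unique he0 hli (hy k) (hy' k) ((hsec k).symm.trans (hsec' k))
  intro k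
  beta_reduce
  rw [(huniq k).1, hsum' k]
  exact Finset.sum_congr rfl fun i _ => by rw [(huniq i).2]
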